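/- Let a > 0, z > 0, and λ = a/z². Let f : [0, ∞) → ℝ be continuous, and suppose the function g(s) = √s·(f(s) − f(λ))/(s − λ) (defined at s = λ by continuous extension) is continuously differentiable on (0, ∞), and set f₁(s) = √s·g′(s). Assume that s ↦ s^{a−1/2} e^{−z²s} f(s) and s ↦ s^{a−1/2} e^{−z²s} f₁(s) are integrable on (0, ∞), and that s^{a} e^{−z²s} g(s) → 0 as s → 0⁺ and as s → ∞. Then ∫₀^∞ s^{a−1/2} e^{−z²s} f(s) ds = Γ(a + 1/2)·z^{−2a−1}·f(λ) + z^{−2}·∫₀^∞ s^{a−1/2} e^{−z²s} f₁(s) ds. -/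

import Mathlib

set_option maxHeartbeats 1000000

open Real Set MeasureTheory Filter Topology

noncomputable def auxH (a z : ℝ) (g : ℝ → ℝ) : ℝ → ℝ :=
  fun s => s ^ a * Real.exp (-z ^ 2 * s) * g s

noncomputable def auxD (a z lam : ℝ) (f f₁ : ℝ → ℝ) : ℝ → ℝ :=
  fun s => (-z ^ 2) * (s ^ (a - 1 / 2) * Real.exp (-z ^ 2 * s) * f s)
    + (z ^ 2 * f lam) * (s ^ (a - 1 / 2) * Real.exp (-z ^ 2 * s))
    + s ^ (a - 1 / 2) * Real.exp (-z ^ 2 * s) * f₁ s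

theorem stmt_14 (a z lam : ℝ) (ha : 0 < a) (hz : 0 < z) (hlam : lam = a / z ^ 2)
    (f g g' : ℝ → ℝ)
    (hf : ContinuousOn f (Set.Ici 0))
    (hg_eq : ∀ s ∈ Set.Ioi (0 : ℝ), s ≠ lam →
      g s = Real.sqrt s * (f s - f lam) / (s - lam))
    (hg_cont : ContinuousOn g (Set.Ioi 0))
    (hg_deriv : ∀ s ∈ Set.Ioi (0 : ℝ), HasDerivAt g (g' s) s)
    (hg'_cont : ContinuousOn g' (Set.Ioi 0))
    (f₁ : ℝ → ℝ) (hf₁ : ∀ s : ℝ, f₁ s = Real.sqrt s * g' s)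
    (hint : IntegrableOn (fun s : ℝ => s ^ (a - 1 / 2) * Real.exp (-z ^ 2 * s) * f s)
      (Set.Ioi 0))
    (hint₁ : IntegrableOn (fun s : ℝ => s ^ (a - 1 / 2) * Real.exp (-z ^ 2 * s) * f₁ s)
      (Set.Ioi 0))
    (hlim0 : Tendsto (fun s : ℝ => s ^ a * Real.exp (-z ^ 2 * s) * g s)
      (nhdsWithin 0 (Set.Ioi 0)) (nhds 0))
    (hlimTop : Tendsto (fun s : ℝ => s ^ a * Real.exp (-z ^ 2 * s) * g s) atTop (nhds 0)) :
    ∫ s in Set.Ioi (0 : ℝ), s ^ (a - 1 / 2) * Real.exp (-z ^ 2 * s) * f s =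
      Real.Gamma (a + 1 / 2) * z ^ (-2 * a - 1) * f lam +
        z ^ (-2 : ℝ) * ∫ s in Set.Ioi (0 : ℝ), s ^ (a - 1 / 2) * Real.exp (-z ^ 2 * s) * f₁ s := by
  have hz2 : (0:ℝ) < z ^ 2 := by positivity
  have ha2 : a = lam * z ^ 2 := by rw [hlam]; field_simp
  -- key derivative
  have key : ∀ s ∈ Ioi (0:ℝ), HasDerivAt (auxH a z g) (auxD a z lam f f₁ s) s := by
    intro s hs
    have hs0 : (0:ℝ) < s := hs
    have h1 : HasDerivAt (fun s : ℝ => s ^ a) (a * s ^ (a - 1)) s :=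
      Real.hasDerivAt_rpow_const (Or.inl hs0.ne')
    have h2 : HasDerivAt (fun s : ℝ => Real.exp (-z ^ 2 * s)) ((-z ^ 2) * Real.exp (-z ^ 2 * s)) s := by
      have hlin : HasDerivAt (fun s : ℝ => -z ^ 2 * s) (-z ^ 2) s := by
        simpa using (hasDerivAt_id s).const_mul (-z ^ 2)
      simpa [mul_comm] using hlin.exp
    have h3 := (h1.mul h2).mul (hg_deriv s hs)
    have e1 : s ^ a = s ^ (a - 1) * s := by
      rw [← Real.rpow_add_one hs0.ne']; congr 1; ring
    have e2 : s ^ a = s ^ (a - 1/2) * Real.sqrt s := by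
      rw [Real.sqrt_eq_rpow, ← Real.rpow_add hs0]; congr 1; ring
    have e3 : s ^ (a - 1/2) = s ^ (a - 1) * Real.sqrt s := by
      rw [Real.sqrt_eq_rpow, ← Real.rpow_add hs0]; congr 1; ring
    have core : (a * s ^ (a - 1) + s ^ a * (-z ^ 2)) * g s
        = (-z ^ 2) * (s ^ (a - 1/2) * (f s - f lam)) := by
      rcases eq_or_ne s lam with rfl | hne
      · rw [e1, ha2]; ring
      · have hsl : s - lam ≠ 0 := sub_ne_zero.mpr hne
        rw [hg_eq s hs hne, e3, e1, ha2]
        field_simp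
        ring
    have hEq : auxD a z lam f f₁ s = (a * s ^ (a - 1) * Real.exp (-z ^ 2 * s)
          + s ^ a * ((-z ^ 2) * Real.exp (-z ^ 2 * s))) * g s
        + s ^ a * Real.exp (-z ^ 2 * s) * g' s := by
      simp only [auxD, hf₁]
      linear_combination (-(Real.exp (-z ^ 2 * s))) * core
        - (Real.exp (-z ^ 2 * s) * g' s) * e2
    rw [hEq]
    exact h3
  -- integrability
  have hG_int : IntegrableOn (fun s : ℝ => s ^ (a - 1/2) * Real.exp (-z ^ 2 * s)) (Ioi 0) := by
    have := integrableOn_rpow_mul_exp_neg_mul_rpow (s := a - 1/2) (p := 1) (b := z ^ 2)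
      (by linarith) one_pos hz2
    simpa [Real.rpow_one] using this
  have hD_int : IntegrableOn (auxD a z lam f f₁) (Ioi 0) := by
    exact ((hint.const_mul _).add (hG_int.const_mul _)).add hint₁
  -- change of variables s = exp u
  have himg : Real.exp '' univ = Ioi 0 := by rw [image_univ, Real.range_exp]
  have hderivW : ∀ x ∈ (univ : Set ℝ), HasDerivWithinAt Real.exp (Real.exp x) univ x :=
    fun x _ => (Real.hasDerivAt_exp x).hasDerivWithinAt
  have hinj : InjOn Real.exp univ := Real.exp_injective.injOn
  have hchg : ∫ x in Ioi (0:ℝ), auxD a z lam f f₁ x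
      = ∫ u, Real.exp u * auxD a z lam f f₁ (Real.exp u) := by
    rw [← himg, integral_image_eq_integral_abs_deriv_smul MeasurableSet.univ hderivW hinj,
      setIntegral_univ]
    congr 1; funext u
    simp [abs_of_pos (Real.exp_pos u)]
  have hint_chg : Integrable (fun u => Real.exp u * auxD a z lam f f₁ (Real.exp u)) := by
    have h5 : IntegrableOn (fun u => |Real.exp u| • auxD a z lam f f₁ (Real.exp u)) univ := by
      rw [← integrableOn_image_iff_integrableOn_abs_deriv_smul MeasurableSet.univ hderivW hinj]
      rwa [himg]
    rw [integrableOn_univ] at h5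
    exact h5.congr (Eventually.of_forall fun u => by simp [abs_of_pos (Real.exp_pos u)])
  -- FTC on ℝ
  have hF : ∀ u : ℝ, HasDerivAt (fun u => auxH a z g (Real.exp u))
      (Real.exp u * auxD a z lam f f₁ (Real.exp u)) u := by
    intro u
    have := (key (Real.exp u) (Real.exp_pos u)).comp u (Real.hasDerivAt_exp u)
    simpa [Function.comp_def, mul_comm] using this
  have hbot : Tendsto (fun u => auxH a z g (Real.exp u)) atBot (𝓝 0) := by
    apply hlim0.comp
    exact tendsto_nhdsWithin_of_tendsto_nhds_of_eventually_within _ Real.tendsto_exp_atBot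
      (Eventually.of_forall fun u => Real.exp_pos u)
  have htop : Tendsto (fun u => auxH a z g (Real.exp u)) atTop (𝓝 0) :=
    hlimTop.comp Real.tendsto_exp_atTop
  have hzero : ∫ s in Ioi (0:ℝ), auxD a z lam f f₁ s = 0 := by
    rw [hchg]
    have := integral_of_hasDerivAt_of_tendsto hF hint_chg hbot htop
    simpa using this
  -- split the integral
  have hsplit : ∫ s in Ioi (0:ℝ), auxD a z lam f f₁ s
      = (-z ^ 2) * (∫ s in Ioi (0:ℝ), s ^ (a - 1/2) * Real.exp (-z ^ 2 * s) * f s)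
        + (z ^ 2 * f lam) * (∫ s in Ioi (0:ℝ), s ^ (a - 1/2) * Real.exp (-z ^ 2 * s))
        + ∫ s in Ioi (0:ℝ), s ^ (a - 1/2) * Real.exp (-z ^ 2 * s) * f₁ s := by
    simp only [auxD]
    have hi12 : Integrable (fun s : ℝ => (-z ^ 2) * (s ^ (a - 1/2) * Real.exp (-z ^ 2 * s) * f s)
        + (z ^ 2 * f lam) * (s ^ (a - 1/2) * Real.exp (-z ^ 2 * s)))
        (volume.restrict (Ioi 0)) :=
      (hint.const_mul (-z ^ 2)).add (hG_int.const_mul (z ^ 2 * f lam))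
    rw [integral_add hi12 hint₁,
      integral_add (hint.const_mul (-z ^ 2)) (hG_int.const_mul (z ^ 2 * f lam)),
      integral_const_mul, integral_const_mul]
  have hIGval : ∫ s in Ioi (0:ℝ), s ^ (a - 1/2) * Real.exp (-z ^ 2 * s)
      = (1 / z ^ 2) ^ (a + 1/2) * Real.Gamma (a + 1/2) := by
    have h6 := integral_rpow_mul_exp_neg_mul_Ioi (a := a + 1/2) (r := z ^ 2)
      (by linarith) hz2
    rw [← h6]
    apply setIntegral_congr_fun measurableSet_Ioi
    intro t ht
    simp only [neg_mul, show a + 1/2 - 1 = a - 1/2 by ring]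
  have hp1 : (z:ℝ) ^ (-2:ℝ) = 1 / z ^ 2 := by
    rw [show ((-2):ℝ) = ((-2 : ℤ) : ℝ) by norm_num, Real.rpow_intCast]
    simp [zpow_neg]
  have hp2 : (1 / z ^ 2 : ℝ) ^ (a + 1/2) = z ^ (-2 * a - 1) := by
    rw [← hp1, ← Real.rpow_mul hz.le]
    congr 1 <;> ring
  have h0 : (-z ^ 2) * (∫ s in Ioi (0:ℝ), s ^ (a - 1/2) * Real.exp (-z ^ 2 * s) * f s)
        + (z ^ 2 * f lam) * (∫ s in Ioi (0:ℝ), s ^ (a - 1/2) * Real.exp (-z ^ 2 * s))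
        + (∫ s in Ioi (0:ℝ), s ^ (a - 1/2) * Real.exp (-z ^ 2 * s) * f₁ s) = 0 := by
    rw [← hsplit]; exact hzero
  rw [hp1, show Real.Gamma (a + 1/2) * z ^ (-2 * a - 1) * f lam
      = f lam * ((1 / z ^ 2) ^ (a + 1/2) * Real.Gamma (a + 1/2)) by rw [hp2]; ring,
    ← hIGval]
  have hgen : ∀ X Y W : ℝ, (-z ^ 2) * X + (z ^ 2 * f lam) * Y + W = 0 →
      X = f lam * Y + 1 / z ^ 2 * W := by
    intro X Y W hXYW
    have hzz : (z:ℝ) ^ 2 ≠ 0 := hz2.ne'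
    field_simp
    linarith
  exact hgen _ _ _ h0
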